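/- Let x > 0 and let u : [0, x] → ℝ be a twice continuously differentiable, nondecreasing function satisfying u''(y) = u(y)² for all y ∈ (0, x), with u(0) = 0 and u(x) = 1. Then u'(y) > 0 for all y ∈ [0, x]. -/

import Mathlib

open Set
open scoped Topology

/-- A nondecreasing, twice continuously differentiable solution of the boundary value
problem `u'' = u²` on `[0,x]` with `u(0) = 0`, `u(x) = 1` has strictly positive
derivative on all of `[0, x]`. -/
theorem deriv_pos_of_bvp
    (x : ℝ) (hx : 0 < x) (u u' u'' : ℝ → ℝ)
    (hu' : ∀ y ∈ Icc 0 x, HasDerivWithinAt u (u' y) (Icc 0 x) y)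
    (hu'' : ∀ y ∈ Icc 0 x, HasDerivWithinAt u' (u'' y) (Icc 0 x) y)
    (hcont : ContinuousOn u'' (Icc 0 x))
    (hmono : MonotoneOn u (Icc 0 x))
    (hode : ∀ y ∈ Ioo 0 x, u'' y = (u y) ^ 2)
    (h0 : u 0 = 0) (hx1 : u x = 1) :
    ∀ y ∈ Icc 0 x, 0 < u' y := by
  have hIoo : interior (Icc (0:ℝ) x) = Ioo 0 x := interior_Icc
  -- u ≥ 0 and u ≤ 1 on [0,x]
  have hu0 : ∀ y ∈ Icc (0:ℝ) x, 0 ≤ u y := fun y hy => by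
    have := hmono (left_mem_Icc.2 hx.le) hy hy.1
    linarith [this]
  have hu1 : ∀ y ∈ Icc (0:ℝ) x, u y ≤ 1 := fun y hy => by
    have := hmono hy (right_mem_Icc.2 hx.le) hy.2
    linarith [this]
  -- u' is nonnegative on [0,x] (derivative of a monotone function)
  have hslope : ∀ y ∈ Icc (0:ℝ) x, ∀ z ∈ Icc (0:ℝ) x \ {y}, 0 ≤ slope u y z := by
    intro y hy z hz
    rw [slope_def_field, div_nonneg_iff]
    rcases lt_or_gt_of_ne (fun h : z = y => hz.2 h) with h | h
    · right
      exact ⟨by simpa using hmono hz.1 hy h.le, by linarith⟩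
    · left
      exact ⟨by simpa using hmono hy hz.1 h.le, by linarith⟩
  have hu'nonneg : ∀ y ∈ Icc (0:ℝ) x, 0 ≤ u' y := by
    intro y hy
    have htend : Filter.Tendsto (slope u y) (𝓝[Icc (0:ℝ) x \ {y}] y) (𝓝 (u' y)) :=
      (hasDerivWithinAt_iff_tendsto_slope).1 (hu' y hy)
    rcases lt_or_eq_of_le hy.2 with h | h
    · have hsub : Ioo y x ⊆ Icc (0:ℝ) x \ {y} := fun z hz =>
        ⟨⟨le_trans hy.1 hz.1.le, hz.2.le⟩, by simpa using hz.1.ne'⟩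
      haveI hne : (𝓝[Ioo y x] y).NeBot := left_nhdsWithin_Ioo_neBot h
      have := htend.mono_left (nhdsWithin_mono _ hsub)
      exact ge_of_tendsto this (eventually_mem_nhdsWithin.mono fun z hz => hslope y hy z (hsub hz))
    · have hsub : Ioo 0 x ⊆ Icc (0:ℝ) x \ {y} := fun z hz =>
        ⟨⟨hz.1.le, hz.2.le⟩, by simp only [mem_singleton_iff]; rw [h]; exact hz.2.ne⟩
      haveI hne : (𝓝[Ioo 0 x] y).NeBot := by rw [h]; exact right_nhdsWithin_Ioo_neBot hx
      have := htend.mono_left (nhdsWithin_mono _ hsub)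
      exact ge_of_tendsto this (eventually_mem_nhdsWithin.mono fun z hz => hslope y hy z (hsub hz))
  -- u' is monotone on [0,x] since u'' = u² ≥ 0 on (0,x)
  have hu'cont : ContinuousOn u' (Icc 0 x) := fun y hy =>
    (hu'' y hy).continuousWithinAt
  have hu'mono : MonotoneOn u' (Icc 0 x) := by
    apply monotoneOn_of_hasDerivWithinAt_nonneg (convex_Icc 0 x) hu'cont
    · intro y hy
      rw [hIoo] at hy ⊢
      exact (hu'' y (Ioo_subset_Icc_self hy)).mono Ioo_subset_Icc_self
    · intro y hy
      rw [hIoo] at hy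
      rw [hode y hy]
      positivity
  -- Main argument: suppose u' y₀ ≤ 0 for some y₀
  intro y₀ hy₀
  by_contra hle
  push_neg at hle
  have h0' : u' 0 = 0 := le_antisymm
    (le_trans (hu'mono (left_mem_Icc.2 hx.le) hy₀ hy₀.1) hle)
    (hu'nonneg 0 (left_mem_Icc.2 hx.le))
  -- Consider g y = (u y + u' y) * exp (-y); it is antitone on [0,x]
  set g : ℝ → ℝ := fun y => (u y + u' y) * Real.exp (-y) with hg
  have hganti : AntitoneOn g (Icc 0 x) := by
    apply antitoneOn_of_hasDerivWithinAt_nonpos (convex_Icc 0 x)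
      (f' := fun y => (u' y + u'' y) * Real.exp (-y) + (u y + u' y) * (-Real.exp (-y)))
    · intro y hy
      have h2 : HasDerivAt (fun y => Real.exp (-y)) (-Real.exp (-y)) y := by
        simpa [Function.comp_def] using ((Real.hasDerivAt_exp (-y)).comp y (hasDerivAt_neg y))
      exact (((hu' y hy).add (hu'' y hy)).mul h2.hasDerivWithinAt).continuousWithinAt
    · intro y hy
      rw [hIoo] at hy ⊢
      have h1 := ((hu' y (Ioo_subset_Icc_self hy)).add
        (hu'' y (Ioo_subset_Icc_self hy))).mono (Ioo_subset_Icc_self (a := (0:ℝ)) (b := x))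
      have h2 : HasDerivAt (fun y => Real.exp (-y)) (-Real.exp (-y)) y := by
        simpa [Function.comp_def] using ((Real.hasDerivAt_exp (-y)).comp y (hasDerivAt_neg y))
      exact h1.mul h2.hasDerivWithinAt
    · intro y hy
      rw [hIoo] at hy
      have hyI := Ioo_subset_Icc_self hy
      have e1 := hode y hy
      have e2 := hu0 y hyI
      have e3 := hu1 y hyI
      have : (u' y + u'' y) * Real.exp (-y) + (u y + u' y) * (-Real.exp (-y))
          = ((u y) ^ 2 - u y) * Real.exp (-y) := by rw [e1]; ring
      rw [this]
      apply mul_nonpos_of_nonpos_of_nonneg _ (Real.exp_nonneg _)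
      nlinarith
  have hgx : g x ≤ g 0 := hganti (left_mem_Icc.2 hx.le) (right_mem_Icc.2 hx.le) hx.le
  have hg0 : g 0 = 0 := by simp [hg, h0, h0']
  have hgxpos : 0 < g x := by
    have := hu'nonneg x (right_mem_Icc.2 hx.le)
    have : 0 < u x + u' x := by rw [hx1]; linarith
    exact mul_pos this (Real.exp_pos _)
  linarith
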